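/- Let p, δ ∈ (0,1) and n ≥ r ≥ 1 be integers. Suppose I is a random subset of {1,...,n} such that Pr[|I| ≥ (1-δ)n] ≥ p. Then for all but at most a 2rδ-fraction of the r-element subsets S ⊆ {1,...,n}, we have Pr[S ⊆ I] ≥ p/2. -/

import Mathlib

open MeasureTheory
open Finset

lemma choose_sub_aux (k m : ℕ) : ∀ n, m ≤ n →
    n.choose (k+1) ≤ m.choose (k+1) + (n - m) * (n-1).choose k := by
  intro n hmn
  induction n, hmn using Nat.le_induction with
  | base => simp
  | succ n hn ih =>
    have h1 : (n-1).choose k ≤ n.choose k := Nat.choose_le_choose k (Nat.sub_le n 1)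
    calc (n+1).choose (k+1) = n.choose k + n.choose (k+1) := Nat.choose_succ_succ n k
      _ ≤ n.choose k + (m.choose (k+1) + (n - m) * (n-1).choose k) := by gcongr
      _ ≤ n.choose k + (m.choose (k+1) + (n - m) * n.choose k) := by gcongr
      _ = m.choose (k+1) + ((n - m) + 1) * n.choose k := by ring
      _ = m.choose (k+1) + (n + 1 - m) * n.choose k := by rw [Nat.succ_sub hn]

lemma measure_toReal_eq_sum {α : Type*} [Fintype α] [DecidableEq α]
    (μ : @Measure α ⊤) [hprob : @IsProbabilityMeasure _ ⊤ μ] (P : α → Prop) [DecidablePred P] :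
    (μ {a | P a}).toReal = ∑ a ∈ univ.filter P, (μ {a}).toReal := by
  have h1 : {a | P a} = ⋃ a ∈ univ.filter P, {a} := by ext x; simp
  rw [h1, measure_biUnion_finset]
  · exact ENNReal.toReal_sum (fun a _ => measure_ne_top μ _)
  · intro a _ b _ hab; simp [Set.disjoint_singleton, hab]
  · intro a _; exact MeasurableSpace.measurableSet_top


/-- Let `p, δ ∈ (0,1)` and `n ≥ r ≥ 1`. Suppose `I` is a random subset of
`{1,...,n}` (modelled as a probability measure `μ` on `Finset (Fin n)` with the discrete
σ-algebra) such that `Pr[|I| ≥ (1-δ)n] ≥ p`. Then for all but at most a `2rδ`-fraction of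
the `r`-element subsets `S ⊆ {1,...,n}`, we have `Pr[S ⊆ I] ≥ p/2`. -/
theorem stmt0 (p δ : ℝ) (hp : p ∈ Set.Ioo (0:ℝ) 1) (hδ : δ ∈ Set.Ioo (0:ℝ) 1)
    (n r : ℕ) (hr : 1 ≤ r) (hrn : r ≤ n)
    (μ : @Measure (Finset (Fin n)) ⊤)
    (hprob : @IsProbabilityMeasure _ ⊤ μ)
    (h : p ≤ (μ {A : Finset (Fin n) | (1 - δ) * n ≤ (A.card : ℝ)}).toReal) :
    ((((Finset.univ : Finset (Fin n)).powersetCard r).filter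
        (fun S => (μ {A : Finset (Fin n) | S ⊆ A}).toReal < p / 2)).card : ℝ)
      ≤ 2 * r * δ * (n.choose r) := by
  classical
  haveI := hprob
  obtain ⟨hp0, hp1⟩ := hp
  obtain ⟨hδ0, hδ1⟩ := hδ
  have hn1 : 1 ≤ n := hr.trans hrn
  set w : Finset (Fin n) → ℝ := fun A => (μ {A}).toReal with hw
  have hw0 : ∀ A, 0 ≤ w A := fun A => ENNReal.toReal_nonneg
  set Pn := (Finset.univ : Finset (Fin n)).powersetCard r with hPn
  set F := Pn.filter (fun S => (μ {A : Finset (Fin n) | S ⊆ A}).toReal < p / 2) with hF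
  set Bf := (Finset.univ : Finset (Finset (Fin n))).filter
      (fun A => (1 - δ) * n ≤ (A.card:ℝ)) with hBf
  have hC0 : (0:ℝ) ≤ (n.choose r : ℝ) := by positivity
  have hPncard : Pn.card = n.choose r := by
    rw [hPn, card_powersetCard, card_univ, Fintype.card_fin]
  have key_count : ∀ A : Finset (Fin n),
      (Pn.filter (fun S => S ⊆ A)).card = A.card.choose r := by
    intro A
    have hset : Pn.filter (fun S => S ⊆ A) = A.powersetCard r := by
      ext S
      simp only [hPn, mem_filter, Finset.mem_powersetCard, Finset.subset_univ, true_and]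
      tauto
    rw [hset, card_powersetCard]
  -- choose identity
  have hid : (n:ℝ) * ((n-1).choose (r-1) : ℝ) = (r:ℝ) * (n.choose r : ℝ) := by
    have heq := Nat.add_one_mul_choose_eq (n-1) (r-1)
    have e1 : n - 1 + 1 = n := by omega
    have e2 : r - 1 + 1 = r := by omega
    rw [e1, e2] at heq
    exact_mod_cast heq.trans (Nat.mul_comm _ _)
  have hX0 : (0:ℝ) ≤ ((n-1).choose (r-1) : ℝ) := by positivity
  -- bound on choose difference
  have hDbound : ∀ A ∈ Bf,
      (n.choose r : ℝ) - (A.card.choose r : ℝ) ≤ δ * r * (n.choose r : ℝ) := by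
    intro A hA
    rw [hBf, mem_filter] at hA
    have hmn : A.card ≤ n := by
      simpa using (card_le_univ A)
    have hnat := choose_sub_aux (r-1) A.card n hmn
    have e2 : r - 1 + 1 = r := by omega
    rw [e2] at hnat
    have hcast : (n.choose r : ℝ) ≤ (A.card.choose r : ℝ)
        + ((n:ℝ) - (A.card:ℝ)) * ((n-1).choose (r-1) : ℝ) := by
      have := (Nat.cast_le (α := ℝ)).2 hnat
      push_cast [Nat.cast_sub hmn] at this
      linarith
    have hδn : (n:ℝ) - (A.card:ℝ) ≤ δ * n := by nlinarith [hA.2]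
    nlinarith [hcast, hδn, hid, hX0]
  -- count lower bound
  have hcnt : ∀ A ∈ Bf,
      (F.card : ℝ) - δ * r * (n.choose r : ℝ) ≤ ((F.filter (fun S => S ⊆ A)).card : ℝ) := by
    intro A hA
    have hsplit : (F.filter (fun S => S ⊆ A)).card
        + (F.filter (fun S => ¬ S ⊆ A)).card = F.card :=
      Finset.card_filter_add_card_filter_not _
    have hsub : (F.filter (fun S => ¬ S ⊆ A)).card
        ≤ (Pn.filter (fun S => ¬ S ⊆ A)).card :=
      Finset.card_le_card (Finset.filter_subset_filter _ (Finset.filter_subset _ _))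
    have hsplit2 : (Pn.filter (fun S => S ⊆ A)).card
        + (Pn.filter (fun S => ¬ S ⊆ A)).card = Pn.card :=
      Finset.card_filter_add_card_filter_not _
    have h1 : ((Pn.filter (fun S => ¬ S ⊆ A)).card : ℝ)
        = (n.choose r : ℝ) - (A.card.choose r : ℝ) := by
      rw [← hPncard, ← key_count A, ← hsplit2]
      push_cast; ring
    have h2 := hDbound A hA
    have h3 : ((F.filter (fun S => ¬ S ⊆ A)).card : ℝ)
        ≤ ((Pn.filter (fun S => ¬ S ⊆ A)).card : ℝ) := by exact_mod_cast hsub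
    have h4 : ((F.filter (fun S => S ⊆ A)).card : ℝ)
        + ((F.filter (fun S => ¬ S ⊆ A)).card : ℝ) = (F.card : ℝ) := by exact_mod_cast hsplit
    linarith
  -- the double sum
  set T : ℝ := ∑ S ∈ F, ∑ A ∈ Bf, (if S ⊆ A then w A else 0) with hT
  -- upper bound on T
  have hupper : T ≤ (F.card : ℝ) * (p / 2) := by
    rw [hT]
    have : ∀ S ∈ F, ∑ A ∈ Bf, (if S ⊆ A then w A else 0) ≤ p / 2 := by
      intro S hS
      have hle : ∑ A ∈ Bf, (if S ⊆ A then w A else 0)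
          ≤ ∑ A ∈ Finset.univ, (if S ⊆ A then w A else 0) := by
        apply Finset.sum_le_sum_of_subset_of_nonneg (Finset.subset_univ _)
        intro A _ _
        split <;> simp [hw0]
      have heq : ∑ A ∈ Finset.univ, (if S ⊆ A then w A else 0)
          = (μ {A : Finset (Fin n) | S ⊆ A}).toReal := by
        rw [measure_toReal_eq_sum μ (fun A => S ⊆ A), Finset.sum_filter]
      rw [hF, mem_filter] at hS
      linarith [hS.2, hle, heq.le, heq.ge]
    calc ∑ S ∈ F, ∑ A ∈ Bf, (if S ⊆ A then w A else 0) ≤ ∑ _S ∈ F, (p / 2) :=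
          Finset.sum_le_sum this
      _ = (F.card : ℝ) * (p / 2) := by rw [Finset.sum_const, nsmul_eq_mul]
  -- rewrite T by swapping
  have hswap : T = ∑ A ∈ Bf, ((F.filter (fun S => S ⊆ A)).card : ℝ) * w A := by
    rw [hT, Finset.sum_comm]
    apply Finset.sum_congr rfl
    intro A _
    rw [← Finset.sum_filter, Finset.sum_const, nsmul_eq_mul]
  by_cases hc : (F.card : ℝ) - δ * r * (n.choose r : ℝ) ≤ 0
  · nlinarith [hc, hδ0, hC0, Nat.cast_nonneg (α := ℝ) r]
  · push_neg at hc
    have hBsum : p ≤ ∑ A ∈ Bf, w A := by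
      have := measure_toReal_eq_sum μ (fun A : Finset (Fin n) => (1 - δ) * n ≤ (A.card:ℝ))
      rw [this] at h
      exact h
    have hlower : ((F.card : ℝ) - δ * r * (n.choose r : ℝ)) * p ≤ T := by
      rw [hswap]
      calc ((F.card : ℝ) - δ * r * (n.choose r : ℝ)) * p
          ≤ ((F.card : ℝ) - δ * r * (n.choose r : ℝ)) * ∑ A ∈ Bf, w A := by
            apply mul_le_mul_of_nonneg_left hBsum hc.le
        _ = ∑ A ∈ Bf, ((F.card : ℝ) - δ * r * (n.choose r : ℝ)) * w A := by
            rw [Finset.mul_sum]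
        _ ≤ ∑ A ∈ Bf, ((F.filter (fun S => S ⊆ A)).card : ℝ) * w A := by
            apply Finset.sum_le_sum
            intro A hA
            exact mul_le_mul_of_nonneg_right (hcnt A hA) (hw0 A)
    nlinarith [hlower, hupper, hp0]
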